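/- Let N ≥ 3 and let 2 ≤ L ≤ N−1. The number z_L of binary strings of length N that contain exactly one occurrence of 001 as a contiguous substring and exactly L occurrences of 00 as a contiguous substring satisfies z_L = Σ_{k=1}^{N−2} ( f_{k−L+1} · f_{N−k} + Σ_{ℓ=2}^{L} f_{k−L+ℓ} · f_{N−ℓ−k−1} ). -/

import Mathlib

/-- `occCount a x` : number of starting positions at which the binary string `a`
of length `k` occurs as a contiguous substring of the binary string `x` of length `N`. -/
def occCount {k N : ℕ} (a : Fin k → Bool) (x : Fin N → Bool) : ℕ :=
  ((List.range (N - k + 1)).filter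
    (fun i => (List.ofFn a).isPrefixOf ((List.ofFn x).drop i))).length

/-- The string `001` (with `0 = false`, `1 = true`). -/
def rule001 : Fin 3 → Bool := ![false, false, true]

/-- The string `00` (with `0 = false`). -/
def rule00 : Fin 2 → Bool := ![false, false]

/-- The Fibonacci sequence `f₁ = f₂ = 1`, `f_{m+2} = f_{m+1} + f_m`, extended by
`f_m = 0` for `m ≤ 0`, as a function on `ℤ`. -/
def fibZ (m : ℤ) : ℤ :=
  if m ≤ 0 then 0 else Nat.fib m.toNat

namespace Stmt9

def w2 : List Bool := [false, false]
def w3 : List Bool := [false, false, true]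

/-- number of occurrences of `w` in `l`, as a Finset sum. -/
def cnt (w l : List Bool) : ℕ :=
  ∑ i ∈ Finset.range (l.length + 1), if w.isPrefixOf (l.drop i) then 1 else 0

lemma pe2 {l : List Bool} : w2.isPrefixOf l = true ↔ ∃ t, l = false :: false :: t := by
  rw [List.isPrefixOf_iff_prefix]
  constructor
  · rintro ⟨t, rfl⟩; exact ⟨t, rfl⟩
  · rintro ⟨t, rfl⟩; exact ⟨t, rfl⟩

lemma pe3 {l : List Bool} : w3.isPrefixOf l = true ↔ ∃ t, l = false :: false :: true :: t := by
  rw [List.isPrefixOf_iff_prefix]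
  constructor
  · rintro ⟨t, rfl⟩; exact ⟨t, rfl⟩
  · rintro ⟨t, rfl⟩; exact ⟨t, rfl⟩

lemma cnt_nil (w : List Bool) : cnt w [] = if w.isPrefixOf [] then 1 else 0 := by
  simp [cnt]

lemma cnt_cons (w : List Bool) (a : Bool) (l : List Bool) :
    cnt w (a :: l) = (if w.isPrefixOf (a :: l) then 1 else 0) + cnt w l := by
  rw [cnt, List.length_cons, Finset.sum_range_succ']
  simp only [List.drop_succ_cons, List.drop_zero]
  rw [add_comm]
  rfl

lemma prefix_isPrefixOf {w l : List Bool} (h : w <+: l) : w.isPrefixOf l = true :=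
  List.isPrefixOf_iff_prefix.2 h

lemma cnt_mono (w x y : List Bool) : cnt w x ≤ cnt w (x ++ y) := by
  rw [cnt, cnt]
  refine le_trans (Finset.sum_le_sum ?_) (Finset.sum_le_sum_of_subset ?_)
  · intro i hi
    simp only [Finset.mem_range, Nat.lt_succ_iff] at hi
    split_ifs with h1 h2
    · rfl
    · exfalso; apply h2
      apply prefix_isPrefixOf
      rw [List.drop_append]
      exact (List.isPrefixOf_iff_prefix.1 h1).trans (List.prefix_append _ _)
    · exact Nat.zero_le _
    · rfl
  · apply Finset.range_subset_range.2
    simp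

lemma cnt3_le_cnt2 (l : List Bool) : cnt w3 l ≤ cnt w2 l := by
  apply Finset.sum_le_sum
  intro i _
  split_ifs with h1 h2
  · rfl
  · exfalso; apply h2
    obtain ⟨t, ht⟩ := pe3.1 h1
    exact pe2.2 ⟨true :: t, ht⟩
  · exact Nat.zero_le _
  · rfl

lemma cnt2_le (l : List Bool) : cnt w2 l ≤ l.length - 1 := by
  induction l with
  | nil => simp [cnt_nil, w2]
  | cons a t ih =>
    rw [cnt_cons]
    rcases t with _ | ⟨b, t'⟩
    · have : ¬ (w2.isPrefixOf [a] = true) := by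
        intro h; obtain ⟨u, hu⟩ := pe2.1 h; simp at hu
      simp [this, cnt_nil, w2]
    · have := ih
      split_ifs with h <;> simp only [List.length_cons] at this ⊢ <;> omega


lemma pre2_append (a : Bool) (x y : List Bool) :
    (w2.isPrefixOf (a :: (x ++ true :: y)) = true) ↔ (w2.isPrefixOf (a :: x) = true) := by
  rcases x with _ | ⟨b, x'⟩ <;> simp [w2, List.cons_prefix_cons, List.prefix_nil]

lemma pre3_append (a : Bool) (x y : List Bool) :
    (w3.isPrefixOf (a :: (x ++ true :: y)) = true) ↔ (w3.isPrefixOf (a :: (x ++ [true])) = true) := by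
  rcases x with _ | ⟨b, x'⟩
  · simp [w3, List.cons_prefix_cons, List.prefix_nil]
  · rcases x' with _ | ⟨c, x''⟩ <;> simp [w3, List.cons_prefix_cons, List.prefix_nil]

lemma split2 (x y : List Bool) : cnt w2 (x ++ true :: y) = cnt w2 x + cnt w2 y := by
  induction x with
  | nil =>
    rw [List.nil_append, cnt_cons, cnt_nil]
    have h1 : ¬ (w2.isPrefixOf (true :: y) = true) := by
      intro h; obtain ⟨t, ht⟩ := pe2.1 h; simp at ht
    have h2 : ¬ (w2.isPrefixOf ([] : List Bool) = true) := by
      intro h; obtain ⟨t, ht⟩ := pe2.1 h; simp at ht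
    simp [h1, h2]
  | cons a x ih =>
    rw [List.cons_append, cnt_cons, cnt_cons (l := x), ih]
    by_cases h : w2.isPrefixOf (a :: x) = true
    · rw [if_pos h, if_pos ((pre2_append a x y).2 h)]; ring
    · rw [if_neg h, if_neg (fun hc => h ((pre2_append a x y).1 hc))]; ring

lemma split3 (x y : List Bool) : cnt w3 (x ++ true :: y) = cnt w3 (x ++ [true]) + cnt w3 y := by
  induction x with
  | nil =>
    rw [List.nil_append, List.nil_append, cnt_cons, cnt_cons, cnt_nil]
    have h1 : ¬ (w3.isPrefixOf (true :: y) = true) := by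
      intro h; obtain ⟨t, ht⟩ := pe3.1 h; simp at ht
    have h2 : ¬ (w3.isPrefixOf ([true]) = true) := by
      intro h; obtain ⟨t, ht⟩ := pe3.1 h; simp at ht
    have h3 : ¬ (w3.isPrefixOf ([] : List Bool) = true) := by
      intro h; obtain ⟨t, ht⟩ := pe3.1 h; simp at ht
    simp [h1, h2, h3]
  | cons a x ih =>
    rw [List.cons_append, List.cons_append, cnt_cons, cnt_cons (l := x ++ [true]), ih]
    by_cases h : w3.isPrefixOf (a :: (x ++ [true])) = true
    · rw [if_pos h, if_pos ((pre3_append a x y).2 h)]; ring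
    · rw [if_neg h, if_neg (fun hc => h ((pre3_append a x y).1 hc))]; ring

lemma junction (u : List Bool) :
    cnt w3 ((u ++ [false, false]) ++ [true]) = cnt w3 (u ++ [false, false]) + 1 := by
  induction u with
  | nil => decide
  | cons a u ih =>
    rw [List.cons_append, List.cons_append, cnt_cons, cnt_cons (l := u ++ [false, false]), ih]
    have key : (w3.isPrefixOf (a :: ((u ++ [false, false]) ++ [true])) = true)
        ↔ (w3.isPrefixOf (a :: (u ++ [false, false])) = true) := by
      rcases u with _ | ⟨b, u'⟩
      · simp [w3, List.cons_prefix_cons, List.prefix_nil]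
      · rcases u' with _ | ⟨c, u''⟩ <;> simp [w3, List.cons_prefix_cons, List.prefix_nil]
    by_cases h : w3.isPrefixOf (a :: (u ++ [false, false])) = true
    · rw [if_pos h, if_pos (key.2 h)]; ring
    · rw [if_neg h, if_neg (fun hc => h (key.1 hc))]; ring

lemma r3one (x : List Bool) : cnt w3 (x ++ [false]) = cnt w3 x := by
  induction x with
  | nil => decide
  | cons a x ih =>
    rw [List.cons_append, cnt_cons, cnt_cons (l := x), ih]
    have key : (w3.isPrefixOf (a :: (x ++ [false])) = true)
        ↔ (w3.isPrefixOf (a :: x) = true) := by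
      rcases x with _ | ⟨b, x'⟩
      · simp [w3, List.cons_prefix_cons, List.prefix_nil]
      · rcases x' with _ | ⟨c, x''⟩ <;> simp [w3, List.cons_prefix_cons, List.prefix_nil]
    by_cases h : w3.isPrefixOf (a :: x) = true
    · rw [if_pos h, if_pos (key.2 h)]
    · rw [if_neg h, if_neg (fun hc => h (key.1 hc))]

lemma r3 (x : List Bool) (m : ℕ) : cnt w3 (x ++ List.replicate m false) = cnt w3 x := by
  induction m generalizing x with
  | zero => simp
  | succ m ih =>
    rw [List.replicate_succ, show x ++ (false :: List.replicate m false)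
      = (x ++ [false]) ++ List.replicate m false by simp, ih, r3one]

lemma r2one (x : List Bool) : cnt w2 (x ++ [false, false]) = cnt w2 (x ++ [false]) + 1 := by
  induction x with
  | nil => decide
  | cons a x ih =>
    rw [List.cons_append, List.cons_append, cnt_cons, cnt_cons (l := x ++ [false]), ih]
    have key : (w2.isPrefixOf (a :: (x ++ [false, false])) = true)
        ↔ (w2.isPrefixOf (a :: (x ++ [false])) = true) := by
      rcases x with _ | ⟨b, x'⟩ <;> simp [w2, List.cons_prefix_cons, List.prefix_nil]
    by_cases h : w2.isPrefixOf (a :: (x ++ [false])) = true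
    · rw [if_pos h, if_pos (key.2 h)]; ring
    · rw [if_neg h, if_neg (fun hc => h (key.1 hc))]; ring

lemma r2 (x : List Bool) (m : ℕ) (hm : 1 ≤ m) :
    cnt w2 (x ++ List.replicate m false) = cnt w2 (x ++ [false]) + (m - 1) := by
  induction m generalizing x with
  | zero => omega
  | succ m ih =>
    rcases Nat.eq_or_lt_of_le hm with h | h
    · simp [← h]
    · have hm' : 1 ≤ m := by omega
      rw [List.replicate_succ, show x ++ (false :: List.replicate m false)
        = (x ++ [false]) ++ List.replicate m false by simp, ih _ hm']
      have := r2one x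
      rw [show (x ++ [false]) ++ [false] = x ++ [false, false] by simp, this]
      omega


lemma not_pre2_nil : ¬ (w2.isPrefixOf ([] : List Bool) = true) := by decide
lemma not_pre3_nil : ¬ (w3.isPrefixOf ([] : List Bool) = true) := by decide

lemma pre2_tt (t : List Bool) : ¬ (w2.isPrefixOf (true :: t) = true) := by
  intro h; obtain ⟨u, hu⟩ := pe2.1 h; simp at hu

lemma pre3_tt (t : List Bool) : ¬ (w3.isPrefixOf (true :: t) = true) := by
  intro h; obtain ⟨u, hu⟩ := pe3.1 h; simp at hu

lemma pre2_ft (t : List Bool) : ¬ (w2.isPrefixOf (false :: true :: t) = true) := by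
  intro h; obtain ⟨u, hu⟩ := pe2.1 h; simp at hu

lemma pre3_ft (t : List Bool) : ¬ (w3.isPrefixOf (false :: true :: t) = true) := by
  intro h; obtain ⟨u, hu⟩ := pe3.1 h; simp at hu

lemma pre2_ff (t : List Bool) : w2.isPrefixOf (false :: false :: t) = true :=
  pe2.2 ⟨t, rfl⟩

lemma cnt2_cons_tt (t : List Bool) : cnt w2 (true :: t) = cnt w2 t := by
  rw [cnt_cons, if_neg (pre2_tt t)]; ring

lemma cnt3_cons_tt (t : List Bool) : cnt w3 (true :: t) = cnt w3 t := by
  rw [cnt_cons, if_neg (pre3_tt t)]; ring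

lemma cnt2_cons_ft (t : List Bool) : cnt w2 (false :: true :: t) = cnt w2 (true :: t) := by
  rw [cnt_cons, if_neg (pre2_ft t)]; ring

lemma cnt3_cons_ft (t : List Bool) : cnt w3 (false :: true :: t) = cnt w3 (true :: t) := by
  rw [cnt_cons, if_neg (pre3_ft t)]; ring

lemma cnt2_cons_ff (t : List Bool) : cnt w2 (false :: false :: t) = 1 + cnt w2 (false :: t) := by
  rw [cnt_cons, if_pos (pre2_ff t)]

/-- Structure theorem: a string with no `001` and `j ≥ 1` occurrences of `00`
is a string with no `00` at all, not ending in `0`, followed by `j+1` zeros. -/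
lemma structure_thm : ∀ (l : List Bool) (j : ℕ), 1 ≤ j → cnt w3 l = 0 → cnt w2 l = j →
    ∃ u, l = u ++ List.replicate (j+1) false ∧ cnt w2 (u ++ [false]) = 0 := by
  intro l
  induction l with
  | nil => intro j hj _ h2; rw [cnt_nil, if_neg not_pre2_nil] at h2; omega
  | cons a t ih =>
    intro j hj h3 h2
    cases a with
    | true =>
      rw [cnt2_cons_tt] at h2
      rw [cnt3_cons_tt] at h3
      obtain ⟨u, hu, hcu⟩ := ih j hj h3 h2
      refine ⟨true :: u, by simp [hu], ?_⟩
      rw [List.cons_append, cnt2_cons_tt]; exact hcu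
    | false =>
      rcases t with _ | ⟨b, t'⟩
      · rw [cnt_cons, cnt_nil, if_neg not_pre2_nil] at h2
        have : ¬ (w2.isPrefixOf [false] = true) := by decide
        rw [if_neg this] at h2; omega
      cases b with
      | true =>
        rw [cnt2_cons_ft, cnt2_cons_tt] at h2
        rw [cnt3_cons_ft, cnt3_cons_tt] at h3
        have h2' : cnt w2 (true :: t') = cnt w2 t' := cnt2_cons_tt t'
        have h3' : cnt w3 (true :: t') = cnt w3 t' := cnt3_cons_tt t'
        obtain ⟨u, hu, hcu⟩ := ih j hj (by rw [h3']; exact h3) (by rw [h2']; exact h2)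
        -- t = true :: t' = u ++ replicate (j+1) false ; u must start with true
        rcases u with _ | ⟨c, u'⟩
        · exfalso
          have : (List.replicate (j+1) false) = true :: t' := by simpa using hu.symm
          rw [List.replicate_succ] at this; simp at this
        · have hc : c = true := by
            rw [List.cons_append] at hu; injection hu with h1 _; exact h1.symm
          subst hc
          refine ⟨false :: true :: u', by simpa using hu, ?_⟩
          rw [List.cons_append, List.cons_append, cnt2_cons_ft, cnt2_cons_tt]
          rw [List.cons_append, cnt2_cons_tt] at hcu
          exact hcu
      | false =>
        -- l = false :: false :: t'
        rw [cnt2_cons_ff] at h2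
        rw [cnt_cons] at h3
        have hind3 : ¬ (w3.isPrefixOf (false :: false :: t') = true) := by
          intro h; rw [if_pos h] at h3; omega
        rw [if_neg hind3] at h3
        have htt' : ∀ t'', t' ≠ true :: t'' := by
          intro t'' ht; apply hind3; rw [ht]; exact pe3.2 ⟨t'', rfl⟩
        rcases t' with _ | ⟨c, t''⟩
        · -- l = [false, false], j = 1
          have hj1 : j = 1 := by
            have : cnt w2 [false] = 0 := by decide
            omega
          subst hj1
          exact ⟨[], rfl, by decide⟩
        cases c with
        | true => exact absurd rfl (htt' t'')
        | false =>
          -- t = false :: false :: t'' ; apply ih to t with j - 1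
          have hge : 1 ≤ cnt w2 (false :: false :: t'') := by
            rw [cnt2_cons_ff]; omega
          obtain ⟨u, hu, hcu⟩ := ih (j-1) (by omega) (by omega) (by omega)
          -- claim u = []
          have hunil : u = [] := by
            rcases u with _ | ⟨d, u'⟩
            · rfl
            · exfalso
              have hd : d = false := by
                rw [List.cons_append] at hu; injection hu with h1 _; exact h1.symm
              subst hd
              rcases u' with _ | ⟨e, u''⟩
              · -- u = [false]: cnt w2 ([false] ++ [false]) = 0 is false
                revert hcu; decide
              · have he : e = false := by
                  rw [List.cons_append, List.cons_append] at hu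
                  injection hu with _ h1; injection h1 with h1 _; exact h1.symm
                subst he
                have : cnt w2 ((false :: false :: u'') ++ [false]) ≥ 1 := by
                  rw [List.cons_append, List.cons_append, cnt2_cons_ff]; omega
                omega
          subst hunil
          simp only [List.nil_append] at hu
          refine ⟨[], ?_, by decide⟩
          rw [List.nil_append, show j + 1 = (j-1+1) + 1 by omega, List.replicate_succ,
            ← hu]


def strs (n : ℕ) : Finset (List Bool) := Finset.univ.image (List.ofFn (α := Bool) (n := n))

lemma mem_strs {n : ℕ} {l : List Bool} : l ∈ strs n ↔ l.length = n := by
  constructor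
  · intro h
    obtain ⟨x, _, rfl⟩ := Finset.mem_image.1 h
    simp
  · intro h
    subst h
    exact Finset.mem_image.2 ⟨l.get, Finset.mem_univ _, List.ofFn_get l⟩

lemma strs_zero : strs 0 = {[]} := by
  ext l; simp [mem_strs, List.length_eq_zero_iff]

lemma strs_succ (n : ℕ) :
    strs (n+1) = (strs n).image (true :: ·) ∪ (strs n).image (false :: ·) := by
  ext l
  simp only [Finset.mem_union, Finset.mem_image, mem_strs]
  constructor
  · intro h
    rcases l with _ | ⟨a, t⟩
    · simp at h
    · cases a
      · exact Or.inr ⟨t, by simpa using h, rfl⟩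
      · exact Or.inl ⟨t, by simpa using h, rfl⟩
  · rintro (⟨t, ht, rfl⟩ | ⟨t, ht, rfl⟩) <;> simp [ht]

lemma cons_injective (a : Bool) : Function.Injective (a :: · : List Bool → List Bool) := by
  intro x y h; injection h

lemma card_cons_split (n : ℕ) (P : List Bool → Prop) [DecidablePred P] :
    ((strs (n+1)).filter P).card
      = ((strs n).filter (fun t => P (true :: t))).card
        + ((strs n).filter (fun t => P (false :: t))).card := by
  rw [strs_succ, Finset.filter_union]
  rw [Finset.card_union_of_disjoint]
  · rw [Finset.filter_image, Finset.filter_image,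
      Finset.card_image_of_injective _ (cons_injective true),
      Finset.card_image_of_injective _ (cons_injective false)]
  · refine Finset.disjoint_left.2 ?_
    intro l hl hl'
    simp only [Finset.mem_filter, Finset.mem_image] at hl hl'
    obtain ⟨⟨t, _, rfl⟩, _⟩ := hl
    obtain ⟨⟨t', _, h⟩, _⟩ := hl'
    exact absurd h (by simp)

lemma count_no00 (n : ℕ) :
    ((strs n).filter (fun l => cnt w2 l = 0)).card = Nat.fib (n+2)
      ∧ ((strs n).filter (fun l => cnt w2 (false :: l) = 0)).card = Nat.fib (n+1) := by
  induction n with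
  | zero =>
    rw [strs_zero]
    constructor
    · rw [Finset.filter_singleton, if_pos (show cnt w2 [] = 0 by decide)]; simp
    · rw [Finset.filter_singleton, if_pos (show cnt w2 [false] = 0 by decide)]; simp
  | succ n ih =>
    obtain ⟨ihF, ihH⟩ := ih
    constructor
    · rw [card_cons_split]
      have e1 : (strs n).filter (fun t => cnt w2 (true :: t) = 0)
          = (strs n).filter (fun l => cnt w2 l = 0) :=
        Finset.filter_congr (fun t _ => by rw [cnt2_cons_tt])
      rw [e1, ihF, ihH, show n+1+2 = n+3 by ring, Nat.fib_add_two (n := n+1)]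
      ring_nf
    · rw [card_cons_split]
      have e1 : (strs n).filter (fun t => cnt w2 (false :: true :: t) = 0)
          = (strs n).filter (fun l => cnt w2 l = 0) :=
        Finset.filter_congr (fun t _ => by rw [cnt2_cons_ft, cnt2_cons_tt])
      have e2 : (strs n).filter (fun t => cnt w2 (false :: false :: t) = 0) = ∅ := by
        refine Finset.filter_false_of_mem ?_
        intro t _
        rw [cnt2_cons_ff]; omega
      rw [e1, e2, ihF]
      simp

lemma count_good (n : ℕ) :
    ((strs n).filter (fun l => cnt w2 (l ++ [false]) = 0)).card = Nat.fib (n+1)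
      ∧ ((strs n).filter (fun l => cnt w2 (false :: (l ++ [false])) = 0)).card = Nat.fib n := by
  induction n with
  | zero =>
    rw [strs_zero]
    constructor
    · rw [Finset.filter_singleton, if_pos (show cnt w2 ([] ++ [false]) = 0 by decide)]; simp
    · rw [Finset.filter_singleton,
        if_neg (show ¬ (cnt w2 (false :: ([] ++ [false])) = 0) by decide)]; simp
  | succ n ih =>
    obtain ⟨ihG, ihGz⟩ := ih
    constructor
    · rw [card_cons_split]
      have e1 : (strs n).filter (fun t => cnt w2 ((true :: t) ++ [false]) = 0)
          = (strs n).filter (fun l => cnt w2 (l ++ [false]) = 0) :=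
        Finset.filter_congr (fun t _ => by rw [List.cons_append, cnt2_cons_tt])
      have e2 : (strs n).filter (fun t => cnt w2 ((false :: t) ++ [false]) = 0)
          = (strs n).filter (fun l => cnt w2 (false :: (l ++ [false])) = 0) :=
        Finset.filter_congr (fun t _ => by rw [List.cons_append])
      rw [e1, e2, ihG, ihGz, Nat.fib_add_two (n := n)]; ring
    · rw [card_cons_split]
      have e1 : (strs n).filter (fun t => cnt w2 (false :: ((true :: t) ++ [false])) = 0)
          = (strs n).filter (fun l => cnt w2 (l ++ [false]) = 0) :=
        Finset.filter_congr (fun t _ => by rw [List.cons_append, cnt2_cons_ft, cnt2_cons_tt])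
      have e2 : (strs n).filter (fun t => cnt w2 (false :: ((false :: t) ++ [false])) = 0) = ∅ := by
        refine Finset.filter_false_of_mem ?_
        intro t _
        rw [List.cons_append, cnt2_cons_ff]; omega
      rw [e1, e2, ihG]
      simp


def Aset (n j : ℕ) : Finset (List Bool) :=
  (strs n).filter (fun l => cnt w3 l = 0 ∧ cnt w2 l = j)

lemma Aset_card_zero (n : ℕ) : (Aset n 0).card = Nat.fib (n+2) := by
  have : Aset n 0 = (strs n).filter (fun l => cnt w2 l = 0) := by
    refine Finset.filter_congr (fun l _ => ?_)
    constructor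
    · exact fun h => h.2
    · intro h
      refine ⟨?_, h⟩
      have := cnt3_le_cnt2 l
      omega
  rw [this, (count_no00 n).1]

lemma Aset_card (n j : ℕ) (hj : 1 ≤ j) : (Aset n j).card = Nat.fib (n - j) := by
  by_cases hn : j + 1 ≤ n
  · have hcard : ((strs (n - (j+1))).filter (fun u => cnt w2 (u ++ [false]) = 0)).card
        = (Aset n j).card := by
      refine Finset.card_nbij' (fun u => u ++ List.replicate (j+1) false)
        (fun l => l.take (n - (j+1))) ?_ ?_ ?_ ?_
      · intro u hu
        rw [Finset.mem_coe, Finset.mem_filter, mem_strs] at hu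
        obtain ⟨hlen, hcnt⟩ := hu
        rw [Finset.mem_coe, Aset, Finset.mem_filter, mem_strs]
        refine ⟨by simp [hlen]; omega, ?_, ?_⟩
        · rw [r3]
          have h1 := cnt3_le_cnt2 u
          have h2 := cnt_mono w2 u [false]
          omega
        · rw [r2 _ _ (by omega), hcnt]; omega
      · intro l hl
        rw [Aset, Finset.mem_coe, Finset.mem_filter, mem_strs] at hl
        obtain ⟨hlen, h3, h2⟩ := hl
        obtain ⟨u, hu, hcu⟩ := structure_thm l j hj h3 h2
        have hulen : u.length = n - (j+1) := by
          have := congrArg List.length hu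
          simp at this; omega
        rw [Finset.mem_coe, Finset.mem_filter, mem_strs, hu]
        simp only []
        rw [List.take_left' hulen]
        exact ⟨hulen, hcu⟩
      · intro u hu
        rw [Finset.mem_coe, Finset.mem_filter, mem_strs] at hu
        exact List.take_left' hu.1
      · intro l hl
        rw [Aset, Finset.mem_coe, Finset.mem_filter, mem_strs] at hl
        obtain ⟨hlen, h3, h2⟩ := hl
        obtain ⟨u, hu, hcu⟩ := structure_thm l j hj h3 h2
        have hulen : u.length = n - (j+1) := by
          have := congrArg List.length hu
          simp at this; omega
        rw [hu]
        simp only []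
        rw [List.take_left' hulen]
    rw [← hcard, (count_good _).1]
    congr 1
    omega
  · have : Aset n j = ∅ := by
      refine Finset.filter_false_of_mem ?_
      intro l hl
      rw [mem_strs] at hl
      have := cnt2_le l
      rw [hl] at this
      rintro ⟨-, h2⟩
      omega
    rw [this]
    have : n - j = 0 := by omega
    simp [this]


lemma dec {i : ℕ} {l : List Bool} (hocc : w3.isPrefixOf (l.drop i) = true) :
    i + 3 ≤ l.length ∧ l = l.take (i+2) ++ true :: l.drop (i+3)
      ∧ l.take (i+2) = l.take i ++ [false, false] := by
  obtain ⟨t, ht⟩ := pe3.1 hocc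
  have hlen3 : i + 3 ≤ l.length := by
    have h1 := congrArg List.length ht
    simp only [List.length_drop, List.length_cons] at h1
    omega
  have hdt : l.drop (i+3) = t := by
    have : List.drop 3 (l.drop i) = t := by rw [ht]; rfl
    rw [List.drop_drop] at this
    exact this
  have hd2 : l.drop (i+2) = true :: t := by
    have : List.drop 2 (l.drop i) = true :: t := by rw [ht]; rfl
    rw [List.drop_drop] at this
    exact this
  refine ⟨hlen3, ?_, ?_⟩
  · conv_lhs => rw [← List.take_append_drop (i+2) l]
    rw [hd2, hdt]
  · rw [List.take_add, ht]
    rfl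

lemma slice_card (N L i j : ℕ) (hi : i + 3 ≤ N) (hj1 : 1 ≤ j) (hjL : j ≤ L) :
    ((((strs N).filter (fun l => cnt w3 l = 1 ∧ cnt w2 l = L)).filter
        (fun l => w3.isPrefixOf (l.drop i) = true)).filter
        (fun l => cnt w2 (l.take (i+2)) = j)).card
      = (Aset (i+2) j).card * (Aset (N-i-3) (L-j)).card := by
  rw [← Finset.card_product]
  refine Finset.card_nbij' (fun l => (l.take (i+2), l.drop (i+3)))
    (fun p => p.1 ++ true :: p.2) ?_ ?_ ?_ ?_
  · intro l hl
    simp only [Finset.mem_coe, Finset.mem_filter, mem_strs] at hl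
    obtain ⟨⟨⟨hlen, h3, h2⟩, hocc⟩, hfib⟩ := hl
    obtain ⟨-, heq, hpee⟩ := dec hocc
    have hsplit3 : cnt w3 l = cnt w3 (l.take (i+2) ++ [true]) + cnt w3 (l.drop (i+3)) := by
      conv_lhs => rw [heq]
      rw [split3]
    have hjun : cnt w3 (l.take (i+2) ++ [true]) = cnt w3 (l.take (i+2)) + 1 := by
      conv_lhs => rw [hpee]
      rw [junction, ← hpee]
    have hsplit2 : cnt w2 l = cnt w2 (l.take (i+2)) + cnt w2 (l.drop (i+3)) := by
      conv_lhs => rw [heq]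
      rw [split2]
    simp only [Finset.mem_coe, Finset.mem_product, Aset, Finset.mem_filter, mem_strs]
    refine ⟨⟨by rw [List.length_take]; omega, by omega, hfib⟩,
      by rw [List.length_drop]; omega, by omega, by omega⟩
  · intro p hp
    simp only [Finset.mem_coe, Finset.mem_product, Aset, Finset.mem_filter, mem_strs] at hp
    obtain ⟨⟨hplen, hp3, hp2⟩, hslen, hs3, hs2⟩ := hp
    obtain ⟨u, hu, hcu⟩ := structure_thm p.1 j hj1 hp3 hp2
    have hulen : u.length + (j+1) = i + 2 := by
      have := congrArg List.length hu
      simp at this; omega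
    have hpee : p.1 = (u ++ List.replicate (j-1) false) ++ [false, false] := by
      rw [hu, List.append_assoc]
      congr 1
      rw [show ([false, false] : List Bool) = List.replicate 2 false from rfl,
        ← List.replicate_add]
      congr 1
      omega
    have hjun : cnt w3 (p.1 ++ [true]) = 1 := by
      conv_lhs => rw [hpee]
      rw [junction, ← hpee, hp3]
    have hl3 : cnt w3 (p.1 ++ true :: p.2) = 1 := by
      rw [split3, hjun, hs3]
    have hl2 : cnt w2 (p.1 ++ true :: p.2) = L := by
      rw [split2, hp2, hs2]; omega
    have hocc : w3.isPrefixOf ((p.1 ++ true :: p.2).drop i) = true := by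
      rw [List.drop_append]
      have h0 : i - p.1.length = 0 := by omega
      rw [h0, List.drop_zero]
      have : List.drop i p.1 = [false, false] := by
        rw [hpee]
        refine List.drop_left' ?_
        simp only [List.length_append, List.length_replicate]
        omega
      rw [this]
      exact pe3.2 ⟨p.2, rfl⟩
    have htake : (p.1 ++ true :: p.2).take (i+2) = p.1 := List.take_left' hplen
    simp only [Finset.mem_coe, Finset.mem_filter, mem_strs]
    refine ⟨⟨⟨by simp [hplen, hslen]; omega, hl3, hl2⟩, hocc⟩, by rw [htake]; exact hp2⟩
  · intro l hl
    simp only [Finset.mem_coe, Finset.mem_filter, mem_strs] at hl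
    obtain ⟨⟨⟨hlen, h3, h2⟩, hocc⟩, hfib⟩ := hl
    exact (dec hocc).2.1.symm
  · intro p hp
    simp only [Finset.mem_coe, Finset.mem_product, Aset, Finset.mem_filter, mem_strs] at hp
    obtain ⟨⟨hplen, -, -⟩, hslen, -, -⟩ := hp
    simp only []
    rw [List.take_left' hplen]
    have : p.1 ++ true :: p.2 = (p.1 ++ [true]) ++ p.2 := by simp
    rw [this, List.drop_left' (by simp [hplen])]


lemma per_i (N L i : ℕ) (hi : i + 3 ≤ N) :
    (((strs N).filter (fun l => cnt w3 l = 1 ∧ cnt w2 l = L)).filter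
        (fun l => w3.isPrefixOf (l.drop i) = true)).card
      = ∑ j ∈ Finset.Icc 1 L, (Aset (i+2) j).card * (Aset (N-i-3) (L-j)).card := by
  rw [Finset.card_eq_sum_card_fiberwise (f := fun l => cnt w2 (l.take (i+2)))
    (t := Finset.Icc 1 L) ?_]
  · exact Finset.sum_congr rfl (fun j hj => by
      rw [Finset.mem_Icc] at hj
      exact slice_card N L i j hi hj.1 hj.2)
  · intro l hl
    simp only [Finset.mem_coe, Finset.mem_filter, mem_strs] at hl
    obtain ⟨⟨hlen, h3, h2⟩, hocc⟩ := hl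
    obtain ⟨-, heq, hpee⟩ := dec hocc
    have hlow : 1 ≤ cnt w2 (l.take (i+2)) := by
      rw [hpee, r2one]
      omega
    have hsplit2 : cnt w2 l = cnt w2 (l.take (i+2)) + cnt w2 (l.drop (i+3)) := by
      conv_lhs => rw [heq]
      rw [split2]
    simp only [Finset.mem_coe, Finset.mem_Icc]
    omega

lemma sum_occ (N L : ℕ) (hN : 3 ≤ N) :
    ((strs N).filter (fun l => cnt w3 l = 1 ∧ cnt w2 l = L)).card
      = ∑ i ∈ Finset.range (N-2),
          (((strs N).filter (fun l => cnt w3 l = 1 ∧ cnt w2 l = L)).filter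
            (fun l => w3.isPrefixOf (l.drop i) = true)).card := by
  have h1 : ((strs N).filter (fun l => cnt w3 l = 1 ∧ cnt w2 l = L)).card
      = ∑ i ∈ Finset.range (N+1),
          (((strs N).filter (fun l => cnt w3 l = 1 ∧ cnt w2 l = L)).filter
            (fun l => w3.isPrefixOf (l.drop i) = true)).card := by
    calc ((strs N).filter (fun l => cnt w3 l = 1 ∧ cnt w2 l = L)).card
        = ∑ l ∈ (strs N).filter (fun l => cnt w3 l = 1 ∧ cnt w2 l = L), (1:ℕ) :=
          Finset.card_eq_sum_ones _
      _ = ∑ l ∈ (strs N).filter (fun l => cnt w3 l = 1 ∧ cnt w2 l = L),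
            ∑ i ∈ Finset.range (N+1), (if w3.isPrefixOf (l.drop i) = true then 1 else 0) := by
          refine Finset.sum_congr rfl (fun l hl => ?_)
          simp only [Finset.mem_filter, mem_strs] at hl
          obtain ⟨hlen, h3, h2⟩ := hl
          rw [show ∑ i ∈ Finset.range (N+1), (if w3.isPrefixOf (l.drop i) = true then 1 else 0)
            = cnt w3 l by rw [cnt, hlen], h3]
      _ = ∑ i ∈ Finset.range (N+1),
            ∑ l ∈ (strs N).filter (fun l => cnt w3 l = 1 ∧ cnt w2 l = L),
              (if w3.isPrefixOf (l.drop i) = true then 1 else 0) := Finset.sum_comm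
      _ = _ := Finset.sum_congr rfl (fun i _ => (Finset.card_filter _ _).symm)
  rw [h1]
  refine (Finset.sum_subset (Finset.range_subset_range.2 (by omega)) ?_).symm
  intro i _ hnot
  rw [Finset.mem_range, not_lt] at hnot
  rw [Finset.card_eq_zero]
  refine Finset.filter_false_of_mem ?_
  intro l hl hocc
  simp only [Finset.mem_filter, mem_strs] at hl
  obtain ⟨t, ht⟩ := pe3.1 hocc
  have := congrArg List.length ht
  simp only [List.length_drop, List.length_cons, hl.1] at this
  omega

lemma lf (q : ℕ → Bool) (m : ℕ) :
    ((List.range m).filter q).length = ∑ i ∈ Finset.range m, if q i then 1 else 0 := by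
  induction m with
  | zero => simp
  | succ m ih =>
    rw [List.range_succ, List.filter_append, List.length_append, ih, Finset.sum_range_succ]
    cases h : q m <;> simp [h]

lemma ofFn_rule001 : List.ofFn rule001 = w3 := by decide
lemma ofFn_rule00 : List.ofFn rule00 = w2 := by decide

lemma occCount_bridge3 {N : ℕ} (hN : 3 ≤ N) (x : Fin N → Bool) :
    occCount rule001 x = cnt w3 (List.ofFn x) := by
  rw [occCount, ofFn_rule001, lf, cnt, List.length_ofFn]
  refine Finset.sum_subset (Finset.range_subset_range.2 (by omega)) ?_
  intro i _ hnot
  rw [Finset.mem_range, not_lt] at hnot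
  rw [if_neg]
  intro hocc
  obtain ⟨t, ht⟩ := pe3.1 hocc
  have := congrArg List.length ht
  simp only [List.length_drop, List.length_cons, List.length_ofFn] at this
  omega

lemma occCount_bridge2 {N : ℕ} (hN : 3 ≤ N) (x : Fin N → Bool) :
    occCount rule00 x = cnt w2 (List.ofFn x) := by
  rw [occCount, ofFn_rule00, lf, cnt, List.length_ofFn]
  refine Finset.sum_subset (Finset.range_subset_range.2 (by omega)) ?_
  intro i _ hnot
  rw [Finset.mem_range, not_lt] at hnot
  rw [if_neg]
  intro hocc
  obtain ⟨t, ht⟩ := pe2.1 hocc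
  have := congrArg List.length ht
  simp only [List.length_drop, List.length_cons, List.length_ofFn] at this
  omega

lemma card_bridge (N L : ℕ) (hN : 3 ≤ N) :
    (Finset.univ.filter fun x : Fin N → Bool =>
        occCount rule001 x = 1 ∧ occCount rule00 x = L).card
      = ((strs N).filter (fun l => cnt w3 l = 1 ∧ cnt w2 l = L)).card := by
  rw [strs, Finset.filter_image,
    Finset.card_image_of_injective _ (List.ofFn_injective)]
  congr 1
  refine Finset.filter_congr (fun x _ => ?_)
  rw [occCount_bridge3 hN, occCount_bridge2 hN]

lemma fibZ_natsub (a b : ℕ) : fibZ ((a:ℤ) - b) = (Nat.fib (a - b) : ℤ) := by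
  unfold fibZ
  split_ifs with h
  · have : a - b = 0 := by omega
    rw [this]
    simp
  · have h2 : ((a:ℤ) - b).toNat = a - b := by omega
    rw [h2]

end Stmt9

open Stmt9 in
theorem stmt9 (N L : ℕ) (hN : 3 ≤ N) (hL2 : 2 ≤ L) (hLN : L ≤ N - 1) :
    ((Finset.univ.filter fun x : Fin N → Bool =>
        occCount rule001 x = 1 ∧ occCount rule00 x = L).card : ℤ)
      = ∑ k ∈ Finset.Icc 1 (N - 2),
          (fibZ ((k : ℤ) - L + 1) * fibZ ((N : ℤ) - k)
            + ∑ l ∈ Finset.Icc 2 L, fibZ ((k : ℤ) - L + l) * fibZ ((N : ℤ) - l - k - 1)) := by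
  rw [card_bridge N L hN, sum_occ N L hN, Nat.cast_sum]
  refine Finset.sum_nbij' (fun i => i + 1) (fun k => k - 1) ?_ ?_ ?_ ?_ ?_
  · intro i hi
    simp only [Finset.mem_range] at hi
    simp only [Finset.mem_Icc]
    omega
  · intro k hk
    simp only [Finset.mem_Icc] at hk
    simp only [Finset.mem_range]
    omega
  · intro i _
    omega
  · intro k hk
    simp only [Finset.mem_Icc] at hk
    omega
  · intro i hi
    simp only [Finset.mem_range] at hi
    have hi3 : i + 3 ≤ N := by omega
    rw [per_i N L i hi3]
    have hsplit : Finset.Icc 1 L = insert L (Finset.Icc 1 (L-1)) := by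
      ext a
      simp only [Finset.mem_Icc, Finset.mem_insert]
      omega
    have hnot : L ∉ Finset.Icc 1 (L-1) := by
      rw [Finset.mem_Icc]; omega
    rw [hsplit, Finset.sum_insert hnot, Nat.sub_self, Aset_card_zero,
      Aset_card (i+2) L (by omega)]
    push_cast
    congr 1
    · -- main term
      rw [show ((i:ℤ) + 1 - L + 1) = ((i+2 : ℕ) : ℤ) - (L : ℕ) by push_cast; ring,
        fibZ_natsub,
        show ((N:ℤ) - ((i:ℕ) + 1)) = ((N : ℕ) : ℤ) - ((i+1 : ℕ) : ℕ) by push_cast; ring,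
        fibZ_natsub]
      have h1 : N - (i+1) = N - i - 3 + 2 := by omega
      rw [h1]
    · -- inner sums
      refine Finset.sum_nbij' (fun j => L + 1 - j) (fun l => L + 1 - l) ?_ ?_ ?_ ?_ ?_
      · intro j hj
        simp only [Finset.mem_Icc] at hj ⊢
        omega
      · intro l hl
        simp only [Finset.mem_Icc] at hl ⊢
        omega
      · intro j hj
        simp only [Finset.mem_Icc] at hj
        omega
      · intro l hl
        simp only [Finset.mem_Icc] at hl
        omega
      · intro j hj
        simp only [Finset.mem_Icc] at hj
        set l := L + 1 - j with hl
        rw [Aset_card (i+2) j (by omega), Aset_card (N-i-3) (L-j) (by omega)]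
        rw [show ((i:ℤ) + 1 - L + l) = ((i + 1 + l : ℕ) : ℤ) - (L : ℕ) by push_cast; ring,
          fibZ_natsub,
          show ((N:ℤ) - l - ((i:ℕ)+1) - 1) = ((N : ℕ) : ℤ) - ((l + i + 2 : ℕ) : ℕ) by
            push_cast; ring,
          fibZ_natsub]
        have e1 : i + 1 + l - L = i + 2 - j := by omega
        have e2 : N - (l + i + 2) = N - i - 3 - (L - j) := by omega
        rw [e1, e2]
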